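/- Let φ : [0,∞) → (0,∞) be continuous and non-decreasing, let 0 < x ≤ T < ∞, and let v : [0,T] → [0,∞) be non-decreasing and 1-Lipschitz with v(0) = 0 and v(T) ≥ x. Then ∫_0^T dt/φ(t − v(t)) ≥ G_φ(x,T), where G_φ(x,T) = ∫_0^{T−x} dt/φ(t) + x/φ(T−x). -/
import Mathlib


/-- Variational lower bound from Lemma A.3: for φ continuous, positive and
non-decreasing on [0,∞), 0 < x ≤ T, and v : [0,T] → [0,∞) non-decreasing,
1-Lipschitz, with v(0) = 0 and v(T) ≥ x, one has
∫_0^T dt/φ(t − v(t)) ≥ G_φ(x,T) = ∫_0^{T−x} dt/φ(t) + x/φ(T−x). -/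
theorem stmt_5 (φ : ℝ → ℝ)
    (hcont : ContinuousOn φ (Set.Ici 0))
    (hpos : ∀ t, 0 ≤ t → 0 < φ t)
    (hmono : MonotoneOn φ (Set.Ici 0))
    (x T : ℝ) (hx : 0 < x) (hxT : x ≤ T)
    (v : ℝ → ℝ)
    (hvnonneg : ∀ t ∈ Set.Icc (0 : ℝ) T, 0 ≤ v t)
    (hvmono : MonotoneOn v (Set.Icc (0 : ℝ) T))
    (hvlip : LipschitzOnWith 1 v (Set.Icc (0 : ℝ) T))
    (hv0 : v 0 = 0) (hvT : x ≤ v T) :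
    (∫ t in (0 : ℝ)..(T - x), 1 / φ t) + x / φ (T - x)
      ≤ ∫ t in (0 : ℝ)..T, 1 / φ (t - v t) := by
  have hT : (0 : ℝ) ≤ T := hx.le.trans hxT
  have hTx : (0 : ℝ) ≤ T - x := by linarith
  have h0mem : (0 : ℝ) ∈ Set.Icc (0 : ℝ) T := ⟨le_refl 0, hT⟩
  have hTmem : T ∈ Set.Icc (0 : ℝ) T := ⟨hT, le_refl T⟩
  -- v t ≤ t on [0,T]
  have hvle : ∀ t ∈ Set.Icc (0 : ℝ) T, v t ≤ t := by
    intro t ht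
    have := hvlip.dist_le_mul t ht 0 h0mem
    simp only [hv0, NNReal.coe_one, one_mul] at this
    have h1 : |v t| ≤ |t| := by simpa [Real.dist_eq] using this
    have := abs_le.mp h1
    calc v t ≤ |v t| := le_abs_self _
    _ ≤ |t| := h1
    _ = t := abs_of_nonneg ht.1
  have hwnn : ∀ t ∈ Set.Icc (0 : ℝ) T, 0 ≤ t - v t := fun t ht =>
    sub_nonneg.mpr (hvle t ht)
  -- t - v t ≤ T - x on [0,T]
  have hwub : ∀ t ∈ Set.Icc (0 : ℝ) T, t - v t ≤ T - x := by
    intro t ht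
    have := hvlip.dist_le_mul T hTmem t ht
    simp only [NNReal.coe_one, one_mul] at this
    have h1 : |v T - v t| ≤ |T - t| := by simpa [Real.dist_eq] using this
    have h2 : v T - v t ≤ T - t := le_trans (le_abs_self _)
      (h1.trans_eq (abs_of_nonneg (by linarith [ht.2])))
    linarith
  set g : ℝ → ℝ := fun t => 1 / φ (min t (T - x)) with hg
  -- continuity facts
  have hw_cont : ContinuousOn (fun t => 1 / φ (t - v t)) (Set.Icc (0 : ℝ) T) := by
    apply ContinuousOn.div continuousOn_const
    · exact hcont.comp (continuousOn_id.sub hvlip.continuousOn)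
        (fun t ht => hwnn t ht)
    · intro t ht; exact (hpos _ (hwnn t ht)).ne'
  have hg_cont : ContinuousOn g (Set.Icc (0 : ℝ) T) := by
    apply ContinuousOn.div continuousOn_const
    · exact hcont.comp ((continuous_min.comp (continuous_id.prodMk continuous_const)).continuousOn)
        (fun t ht => le_min ht.1 hTx)
    · intro t ht; exact (hpos _ (le_min ht.1 hTx)).ne'
  have hw_int : IntervalIntegrable (fun t => 1 / φ (t - v t)) MeasureTheory.volume 0 T :=
    (Set.uIcc_of_le hT ▸ hw_cont).intervalIntegrable
  have hg_int : IntervalIntegrable g MeasureTheory.volume 0 T :=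
    (Set.uIcc_of_le hT ▸ hg_cont).intervalIntegrable
  have hg_int1 : IntervalIntegrable g MeasureTheory.volume 0 (T - x) :=
    hg_int.mono_set (by rw [Set.uIcc_of_le hTx, Set.uIcc_of_le hT]; exact Set.Icc_subset_Icc le_rfl (by linarith))
  have hg_int2 : IntervalIntegrable g MeasureTheory.volume (T - x) T :=
    hg_int.mono_set (by rw [Set.uIcc_of_le (by linarith : T - x ≤ T), Set.uIcc_of_le hT]; exact Set.Icc_subset_Icc hTx le_rfl)
  -- pointwise bound
  have hpt : ∀ t ∈ Set.Icc (0 : ℝ) T, g t ≤ 1 / φ (t - v t) := by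
    intro t ht
    have hm : t - v t ≤ min t (T - x) := le_min (by linarith [hvnonneg t ht]) (hwub t ht)
    have hφ : φ (t - v t) ≤ φ (min t (T - x)) :=
      hmono (hwnn t ht) (le_trans (hwnn t ht) hm) hm
    exact one_div_le_one_div_of_le (hpos _ (hwnn t ht)) hφ
  have hmain : ∫ t in (0 : ℝ)..T, g t ≤ ∫ t in (0 : ℝ)..T, 1 / φ (t - v t) :=
    intervalIntegral.integral_mono_on hT hg_int hw_int hpt
  have hsplit : (∫ t in (0 : ℝ)..(T - x), g t) + (∫ t in (T - x)..T, g t)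
      = ∫ t in (0 : ℝ)..T, g t :=
    intervalIntegral.integral_add_adjacent_intervals hg_int1 hg_int2
  have h1 : (∫ t in (0 : ℝ)..(T - x), g t) = ∫ t in (0 : ℝ)..(T - x), 1 / φ t := by
    apply intervalIntegral.integral_congr
    intro t ht
    rw [Set.uIcc_of_le hTx] at ht
    simp [hg, min_eq_left ht.2]
  have h2 : (∫ t in (T - x)..T, g t) = x / φ (T - x) := by
    have : (∫ t in (T - x)..T, g t) = ∫ t in (T - x)..T, 1 / φ (T - x) := by
      apply intervalIntegral.integral_congr
      intro t ht
      rw [Set.uIcc_of_le (by linarith : T - x ≤ T)] at ht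
      simp [hg, min_eq_right ht.1]
    rw [this, intervalIntegral.integral_const]
    rw [smul_eq_mul]
    ring
  linarith [hmain, hsplit, h1, h2]
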